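/- Let f be a convex function on the convex hull S of two line segments l₁ and l₂ in ℝ² whose interiors intersect in a point. If f vanishes identically on l₁ ∪ l₂, then f vanishes identically on S. -/

import Mathlib

open Set

set_option maxHeartbeats 1000000 in
/-- If `f` is convex on the convex hull `S` of two line segments in
`ℝ²` whose open segments intersect, and `f` vanishes on both segments, then `f`
vanishes identically on `S`. -/
theorem stmt_5 (p₁ q₁ p₂ q₂ : ℝ × ℝ) (f : ℝ × ℝ → ℝ)
    (hmeet : (openSegment ℝ p₁ q₁ ∩ openSegment ℝ p₂ q₂).Nonempty)
    (hf : ConvexOn ℝ (convexHull ℝ (segment ℝ p₁ q₁ ∪ segment ℝ p₂ q₂)) f)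
    (h0 : ∀ x ∈ segment ℝ p₁ q₁ ∪ segment ℝ p₂ q₂, f x = 0) :
    ∀ x ∈ convexHull ℝ (segment ℝ p₁ q₁ ∪ segment ℝ p₂ q₂), f x = 0 := by
  obtain ⟨c, hc1, hc2⟩ := hmeet
  have hS : convexHull ℝ (segment ℝ p₁ q₁ ∪ segment ℝ p₂ q₂)
      = convexJoin ℝ (segment ℝ p₁ q₁) (segment ℝ p₂ q₂) :=
    (convex_segment p₁ q₁).convexHull_union (convex_segment p₂ q₂)
      ⟨p₁, left_mem_segment ℝ p₁ q₁⟩ ⟨p₂, left_mem_segment ℝ p₂ q₂⟩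
  -- upper bound: f ≤ 0 on S
  have hle : ∀ x ∈ convexHull ℝ (segment ℝ p₁ q₁ ∪ segment ℝ p₂ q₂), f x ≤ 0 := by
    intro x hx
    have hx' := hx
    rw [hS, mem_convexJoin] at hx'
    obtain ⟨a, ha, b, hb, s, t, hs, ht, hst, rfl⟩ := hx'
    have h := hf.2 (subset_convexHull ℝ _ (Or.inl ha)) (subset_convexHull ℝ _ (Or.inr hb))
      hs ht hst
    rw [h0 a (Or.inl ha), h0 b (Or.inr hb)] at h
    simpa using h
  intro x hx
  have hx' := hx
  rw [hS, mem_convexJoin] at hx'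
  obtain ⟨a, ha, b, hb, s, t, hs, ht, hst, rfl⟩ := hx'
  obtain ⟨α, α', hα, hα', hαs, hcα⟩ := hc1
  obtain ⟨β, β', hβ, hβ', hβs, hcβ⟩ := hc2
  obtain ⟨u, u', hu, hu', hus, rfl⟩ := ha
  obtain ⟨v, v', hv, hv', hvs, rfl⟩ := hb
  set a : ℝ × ℝ := u • p₁ + u' • q₁ with ha'
  set b : ℝ × ℝ := v • p₂ + v' • q₂ with hb'
  set ε : ℝ := min (min α α') (min β β') with hε
  have hεpos : 0 < ε := lt_min (lt_min hα hα') (lt_min hβ hβ')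
  have hεα : ε ≤ α := (min_le_left _ _).trans (min_le_left _ _)
  have hεα' : ε ≤ α' := (min_le_left _ _).trans (min_le_right _ _)
  have hεβ : ε ≤ β := (min_le_right _ _).trans (min_le_left _ _)
  have hεβ' : ε ≤ β' := (min_le_right _ _).trans (min_le_right _ _)
  have hz1 : (1 + ε) • c - ε • a ∈ segment ℝ p₁ q₁ := by
    refine ⟨α + ε * (α - u), α' + ε * (α' - u'), ?_, ?_,
      by linear_combination (1 + ε) * hαs - ε * hus, ?_⟩
    · nlinarith [mul_nonneg hεpos.le (by linarith : (0:ℝ) ≤ α - u + 1)]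
    · nlinarith [mul_nonneg hεpos.le (by linarith : (0:ℝ) ≤ α' - u' + 1)]
    · rw [← hcα, ha']; module
  have hz2 : (1 + ε) • c - ε • b ∈ segment ℝ p₂ q₂ := by
    refine ⟨β + ε * (β - v), β' + ε * (β' - v'), ?_, ?_,
      by linear_combination (1 + ε) * hβs - ε * hvs, ?_⟩
    · nlinarith [mul_nonneg hεpos.le (by linarith : (0:ℝ) ≤ β - v + 1)]
    · nlinarith [mul_nonneg hεpos.le (by linarith : (0:ℝ) ≤ β' - v' + 1)]
    · rw [← hcβ, hb']; module
  set z : ℝ × ℝ := (1 + ε) • c - ε • (s • a + t • b) with hzdef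
  have hzS : z ∈ convexHull ℝ (segment ℝ p₁ q₁ ∪ segment ℝ p₂ q₂) := by
    rw [hS, mem_convexJoin]
    refine ⟨_, hz1, _, hz2, s, t, hs, ht, hst, ?_⟩
    rw [hzdef]
    match_scalars <;>
      first
      | linear_combination (1 + ε) * hst
      | linear_combination (-1 - ε) * hst
      | linear_combination (2 + 2 * ε) * hst
      | linear_combination (-2 - 2 * ε) * hst
      | nlinarith [hst]
  have hfz : f z ≤ 0 := hle z hzS
  have hd : (0:ℝ) < 1 + ε := by linarith
  clear_value z ε a b
  have hcomb : (ε / (1 + ε)) • (s • a + t • b) + (1 / (1 + ε)) • z = c := by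
    rw [hzdef]
    match_scalars <;> field_simp <;> ring
  have hsum : ε / (1 + ε) + 1 / (1 + ε) = 1 := by
    rw [← add_div, add_comm ε 1, div_self hd.ne']
  have hconv := hf.2 hx hzS (by positivity : (0:ℝ) ≤ ε / (1 + ε))
    (by positivity : (0:ℝ) ≤ 1 / (1 + ε)) hsum
  rw [hcomb] at hconv
  have hfc : f c = 0 := h0 c (Or.inl ⟨α, α', hα.le, hα'.le, hαs, hcα⟩)
  have hfx : f (s • a + t • b) ≤ 0 := hle _ hx
  rw [hfc] at hconv
  simp only [smul_eq_mul] at hconv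
  have hr : 0 < ε / (1 + ε) := by positivity
  have h1 : 0 ≤ (ε / (1 + ε)) * f (s • a + t • b) := by
    nlinarith [mul_nonpos_of_nonneg_of_nonpos (by positivity : (0:ℝ) ≤ 1 / (1+ε)) hfz]
  have h2 : 0 ≤ f (s • a + t • b) := by
    by_contra h
    push_neg at h
    nlinarith [mul_neg_of_pos_of_neg hr h]
  linarith
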